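/- Let u be C² with ∇u ≠ 0 at a point of an n-dimensional Riemannian manifold, and let n' ≥ n be real. Then |∇u|^{2p-4}(|H_u|² + p(p-2)A_u²) ≥ (Δ_p u)²/n' + (n'/(n'-1))·(Δ_p u/n' - (p-1)|∇u|^{p-2}A_u)². -/

import Mathlib

noncomputable section

/-- The Hessian `H_f(x)(v,w)` of `f` at `x`, as the derivative of the gradient. -/
def hess {n : ℕ} (f : EuclideanSpace ℝ (Fin n) → ℝ) (x v w : EuclideanSpace ℝ (Fin n)) : ℝ :=
  inner ℝ (fderiv ℝ (gradient f) x v) w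

/-- The divergence of a vector field on Euclidean space. -/
def divg {n : ℕ} (X : EuclideanSpace ℝ (Fin n) → EuclideanSpace ℝ (Fin n))
    (x : EuclideanSpace ℝ (Fin n)) : ℝ :=
  ∑ i : Fin n, inner ℝ (fderiv ℝ X x (EuclideanSpace.single i (1:ℝ)))
      (EuclideanSpace.single i (1:ℝ))

/-- The Laplacian `Δf = div ∇f`. -/
def lapl {n : ℕ} (f : EuclideanSpace ℝ (Fin n) → ℝ) (x : EuclideanSpace ℝ (Fin n)) : ℝ :=
  divg (gradient f) x

/-- The `p`-Laplacian `Δ_p f = div(|∇f|^{p-2}∇f)`. -/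
def plap {n : ℕ} (p : ℝ) (f : EuclideanSpace ℝ (Fin n) → ℝ)
    (x : EuclideanSpace ℝ (Fin n)) : ℝ :=
  divg (fun y => ‖gradient f y‖ ^ (p-2) • gradient f y) x

/-- `A_u = H_u(∇u,∇u)/|∇u|²`. -/
def Au {n : ℕ} (f : EuclideanSpace ℝ (Fin n) → ℝ) (x : EuclideanSpace ℝ (Fin n)) : ℝ :=
  hess f x (gradient f x) (gradient f x) / ‖gradient f x‖ ^ 2

/-- The squared Hilbert–Schmidt norm `|H_u|²` of the Hessian. -/
def hessNormSq {n : ℕ} (f : EuclideanSpace ℝ (Fin n) → ℝ)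
    (x : EuclideanSpace ℝ (Fin n)) : ℝ :=
  ∑ i : Fin n, ∑ j : Fin n,
    (hess f x (EuclideanSpace.single i (1:ℝ)) (EuclideanSpace.single j (1:ℝ))) ^ 2

/-- The second order part `P_u^{II}` of the linearized `p`-Laplacian:
`P_u^{II}(η) = |∇u|^{p-2}Δη + (p-2)|∇u|^{p-4}H_η(∇u,∇u)`. -/
def PII {n : ℕ} (p : ℝ) (u η : EuclideanSpace ℝ (Fin n) → ℝ)
    (x : EuclideanSpace ℝ (Fin n)) : ℝ :=
  ‖gradient u x‖ ^ (p-2) * lapl η x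
    + (p-2) * ‖gradient u x‖ ^ (p-4) * hess η x (gradient u x) (gradient u x)

/-- The Ricci curvature of flat Euclidean space (identically zero). -/
def ricci {n : ℕ} (x v w : EuclideanSpace ℝ (Fin n)) : ℝ := 0

/-! ### Auxiliary lemmas -/

lemma alg_lemma {n : ℕ} (hn : 2 ≤ n) (n' : ℝ) (hn' : (n:ℝ) ≤ n')
    (H : Fin n → Fin n → ℝ) (ν : Fin n → ℝ) (hν : ∑ i, ν i ^ 2 = 1) :
    (∑ i, ∑ j, H i j * ν i * ν j) ^ 2
      + ((∑ i, H i i) - ∑ i, ∑ j, H i j * ν i * ν j) ^ 2 / (n'-1)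
      ≤ ∑ i, ∑ j, (H i j) ^ 2 := by
  set a := ∑ i, ∑ j, H i j * ν i * ν j with ha
  set T := ∑ i, H i i with hT
  have hn'2 : (2:ℝ) ≤ n' := le_trans (by exact_mod_cast hn) hn'
  have hpos : (0:ℝ) < n' - 1 := by linarith
  set l := (T - a) / (n' - 1) with hl
  have hl' : l * (n' - 1) = T - a := by rw [hl]; exact div_mul_cancel₀ _ (ne_of_gt hpos)
  set c := a - l with hc
  have key : (0:ℝ) ≤ ∑ i, ∑ j,
      (H i j - c * ν i * ν j - l * (if i = j then (1:ℝ) else 0)) ^ 2 :=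
    Finset.sum_nonneg fun i _ => Finset.sum_nonneg fun j _ => sq_nonneg _
  have inner_i : ∀ i, ∑ j,
      (H i j - c * ν i * ν j - l * (if i = j then (1:ℝ) else 0)) ^ 2
      = (∑ j, (H i j)^2) - 2*c*(ν i*(∑ j, H i j * ν j)) - 2*l*H i i
        + c^2 * (ν i^2 * (∑ j, ν j ^2)) + 2*c*l* ν i^2 + l^2 := by
    intro i
    have expand : ∀ j, (H i j - c * ν i * ν j - l * (if i = j then (1:ℝ) else 0)) ^ 2
        = (H i j)^2 - 2*c*(ν i * (H i j * ν j)) - 2*l*(H i j * (if i = j then (1:ℝ) else 0))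
          + c^2 * (ν i^2 * ν j^2) + 2*c*l*(ν i * (ν j * (if i = j then (1:ℝ) else 0)))
          + l^2 * ((if i = j then (1:ℝ) else 0)) := by
      intro j
      by_cases h : i = j <;> simp [h] <;> ring
    rw [Finset.sum_congr rfl fun j _ => expand j]
    rw [Finset.sum_add_distrib, Finset.sum_add_distrib, Finset.sum_add_distrib,
        Finset.sum_sub_distrib, Finset.sum_sub_distrib]
    have e1 : ∑ j, H i j * (if i = j then (1:ℝ) else 0) = H i i := by
      simp [mul_ite, Finset.sum_ite_eq]
    have e2 : ∑ j, ν j * (if i = j then (1:ℝ) else 0) = ν i := by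
      simp [mul_ite, Finset.sum_ite_eq]
    have e3 : ∑ j : Fin n, (if i = j then (1:ℝ) else 0) = 1 := by
      simp [Finset.sum_ite_eq]
    simp only [← Finset.mul_sum]
    rw [e1, e2, e3]
    ring
  rw [Finset.sum_congr rfl fun i _ => inner_i i] at key
  have ebig : ∑ i, ((∑ j, (H i j)^2) - 2*c*(ν i*(∑ j, H i j * ν j)) - 2*l*H i i
        + c^2 * (ν i^2 * (∑ j, ν j ^2)) + 2*c*l*ν i^2 + l^2)
      = (∑ i, ∑ j, (H i j)^2) - 2*c*a - 2*l*T + c^2 + 2*c*l + l^2 * n := by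
    rw [Finset.sum_add_distrib, Finset.sum_add_distrib, Finset.sum_add_distrib,
        Finset.sum_sub_distrib, Finset.sum_sub_distrib]
    have h1 : ∑ i, ν i * (∑ j, H i j * ν j) = a := by
      rw [ha]
      refine Finset.sum_congr rfl fun i _ => ?_
      rw [Finset.mul_sum]
      exact Finset.sum_congr rfl fun j _ => by ring
    have h2 : ∑ i, ν i^2 * (∑ j, ν j ^2) = 1 := by
      rw [← Finset.sum_mul, hν]; norm_num
    simp only [← Finset.mul_sum]
    rw [h1, h2, hν, Finset.sum_const, Finset.card_univ]
    simp [hT]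
    ring
  rw [ebig] at key
  have goal2 : a^2 + l^2*(n'-1) ≤ ∑ i, ∑ j, (H i j)^2 := by
    have k1 : l*(T-a) = l^2*(n'-1) := by rw [← hl']; ring
    have k2 : l^2*(n:ℝ) ≤ l^2*n' := mul_le_mul_of_nonneg_left hn' (sq_nonneg l)
    simp only [hc] at key
    nlinarith [key, k1, k2]
  have : (T - a)^2/(n'-1) = l^2*(n'-1) := by
    rw [← hl']; field_simp
  linarith [goal2, this.ge, this.le]

lemma esum_repr {n : ℕ} (w : EuclideanSpace ℝ (Fin n)) :
    ∑ i, w i • EuclideanSpace.single i (1:ℝ) = w := by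
  ext j
  rw [WithLp.ofLp_sum, Finset.sum_apply]
  simp [EuclideanSpace.single_apply, Finset.sum_ite_eq]

lemma grad_diff {n : ℕ} {u : EuclideanSpace ℝ (Fin n) → ℝ} {x : EuclideanSpace ℝ (Fin n)}
    (hu : ContDiffAt ℝ 2 u x) : DifferentiableAt ℝ (gradient u) x := by
  have h1 : ContDiffAt ℝ 1 (fderiv ℝ u) x := hu.fderiv_right (by norm_num)
  have h2 : DifferentiableAt ℝ (fderiv ℝ u) x := h1.differentiableAt (by norm_num)
  have : gradient u = fun y =>
      (InnerProductSpace.toDual ℝ (EuclideanSpace ℝ (Fin n))).symm (fderiv ℝ u y) := rfl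
  rw [this]
  exact (InnerProductSpace.toDual ℝ (EuclideanSpace ℝ
    (Fin n))).symm.toContinuousLinearEquiv.toContinuousLinearMap.differentiableAt.comp x h2

lemma plap_eq {n : ℕ} (p : ℝ) (u : EuclideanSpace ℝ (Fin n) → ℝ) (x : EuclideanSpace ℝ (Fin n))
    (hu : ContDiffAt ℝ 2 u x) (hgrad : gradient u x ≠ 0) :
    plap p u x = ‖gradient u x‖ ^ (p-2) * lapl u x
      + (p-2) * ‖gradient u x‖ ^ (p-4) * hess u x (gradient u x) (gradient u x) := by
  have hVd : DifferentiableAt ℝ (gradient u) x := grad_diff hu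
  set D := fderiv ℝ (gradient u) x with hDdef
  have hD : HasFDerivAt (gradient u) D x := hVd.hasFDerivAt
  set V := gradient u x with hVdef
  have hVnorm : (0:ℝ) < ‖V‖ := norm_pos_iff.mpr hgrad
  set r2 : ℝ := @inner ℝ _ _ V V with hr2def
  have hr2 : r2 = ‖V‖ ^ (2:ℕ) := real_inner_self_eq_norm_sq V
  have hr2pos : 0 < r2 := by rw [hr2]; positivity
  have hS : HasFDerivAt (fun y => (inner ℝ (gradient u y) (gradient u y) : ℝ))
      ((fderivInnerCLM ℝ (V, V)).comp (D.prod D)) x := hD.inner ℝ hD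
  have ht : HasDerivAt (fun t : ℝ => t ^ ((p-2)/2)) (((p-2)/2) * r2 ^ ((p-2)/2 - 1)) r2 :=
    Real.hasDerivAt_rpow_const (Or.inl (ne_of_gt hr2pos))
  have hφ : HasFDerivAt (fun y => (inner ℝ (gradient u y) (gradient u y) : ℝ) ^ ((p-2)/2))
      ((((p-2)/2) * r2 ^ ((p-2)/2 - 1)) • ((fderivInnerCLM ℝ (V, V)).comp (D.prod D))) x :=
    by have := ht.comp_hasFDerivAt x hS; exact this
  have heq : ∀ v : EuclideanSpace ℝ (Fin n),
      ‖v‖ ^ (p-2) = (inner ℝ v v : ℝ) ^ ((p-2)/2) := by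
    intro v
    rw [real_inner_self_eq_norm_sq, ← Real.rpow_natCast ‖v‖ 2,
      ← Real.rpow_mul (norm_nonneg v)]
    congr 1
    ring
  have hF : HasFDerivAt (fun y => ‖gradient u y‖ ^ (p-2) • gradient u y)
      (((inner ℝ V V : ℝ) ^ ((p-2)/2)) • D
        + ((((p-2)/2) * r2 ^ ((p-2)/2 - 1)) •
            ((fderivInnerCLM ℝ (V, V)).comp (D.prod D))).smulRight V) x := by
    simp only [heq]
    exact hφ.smul hD
  have hfd := hF.fderiv
  rw [plap, divg, hfd]
  have hlapl : lapl u x = ∑ i : Fin n, (inner ℝ (D (EuclideanSpace.single i (1:ℝ)))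
      (EuclideanSpace.single i (1:ℝ)) : ℝ) := rfl
  have hterm : ∀ i : Fin n,
      (inner ℝ ((((inner ℝ V V : ℝ) ^ ((p-2)/2)) • D
        + ((((p-2)/2) * r2 ^ ((p-2)/2 - 1)) •
            ((fderivInnerCLM ℝ (V, V)).comp (D.prod D))).smulRight V)
          (EuclideanSpace.single i (1:ℝ))) (EuclideanSpace.single i (1:ℝ)) : ℝ)
      = ((inner ℝ V V : ℝ) ^ ((p-2)/2)) * (inner ℝ (D (EuclideanSpace.single i (1:ℝ)))
            (EuclideanSpace.single i (1:ℝ)) : ℝ)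
        + (((p-2)/2) * r2 ^ ((p-2)/2 - 1)) * (2 * (inner ℝ (D (EuclideanSpace.single i (1:ℝ))) V : ℝ))
            * V i := by
    intro i
    rw [ContinuousLinearMap.add_apply, inner_add_left]
    congr 1
    · rw [ContinuousLinearMap.smul_apply, real_inner_smul_left]
    · rw [ContinuousLinearMap.smulRight_apply, ContinuousLinearMap.smul_apply,
        real_inner_smul_left, ContinuousLinearMap.comp_apply, ContinuousLinearMap.prod_apply,
        fderivInnerCLM_apply]
      simp only [EuclideanSpace.inner_single_right, map_one, one_mul, conj_trivial]
      rw [real_inner_comm V (D (EuclideanSpace.single i (1:ℝ)))]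
      simp only [smul_eq_mul]
      ring
  rw [Finset.sum_congr rfl fun i _ => hterm i, Finset.sum_add_distrib,
    ← Finset.mul_sum, ← hlapl]
  have hDVV : ∑ i : Fin n, (((p-2)/2) * r2 ^ ((p-2)/2 - 1))
        * (2 * (inner ℝ (D (EuclideanSpace.single i (1:ℝ))) V : ℝ)) * V i
      = ((p-2) * r2 ^ ((p-2)/2 - 1)) * (inner ℝ (D V) V : ℝ) := by
    have hDV : D V = ∑ i : Fin n, V i • D (EuclideanSpace.single i (1:ℝ)) := by
      conv_lhs => rw [← esum_repr V]
      rw [map_sum]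
      exact Finset.sum_congr rfl fun i _ => (D.map_smul _ _)
    rw [hDV, sum_inner, Finset.mul_sum]
    refine Finset.sum_congr rfl fun i _ => ?_
    rw [real_inner_smul_left]
    ring
  rw [hDVV]
  have hφV : (inner ℝ V V : ℝ) ^ ((p-2)/2) = ‖V‖ ^ (p-2) := (heq V).symm
  have hr4 : r2 ^ ((p-2)/2 - 1) = ‖V‖ ^ (p-4) := by
    rw [hr2, ← Real.rpow_natCast ‖V‖ 2, ← Real.rpow_mul (norm_nonneg V)]
    congr 1
    ring
  rw [hφV, hr4]
  rfl

lemma hess_repr {n : ℕ} (u : EuclideanSpace ℝ (Fin n) → ℝ) (x v w : EuclideanSpace ℝ (Fin n)) :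
    hess u x v w = ∑ i, ∑ j,
      hess u x (EuclideanSpace.single i (1:ℝ)) (EuclideanSpace.single j (1:ℝ)) * v i * w j := by
  set D := fderiv ℝ (gradient u) x with hDdef
  have hDv : D v = ∑ i : Fin n, v i • D (EuclideanSpace.single i (1:ℝ)) := by
    conv_lhs => rw [← esum_repr v]
    rw [map_sum]
    exact Finset.sum_congr rfl fun i _ => (D.map_smul _ _)
  show (inner ℝ (D v) w : ℝ) = _
  rw [hDv, sum_inner]
  refine Finset.sum_congr rfl fun i _ => ?_
  rw [real_inner_smul_left]
  have hw : (inner ℝ (D (EuclideanSpace.single i (1:ℝ))) w : ℝ)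
      = ∑ j, (inner ℝ (D (EuclideanSpace.single i (1:ℝ))) (EuclideanSpace.single j (1:ℝ)) : ℝ)
          * w j := by
    conv_lhs => rw [← esum_repr w]
    rw [inner_sum]
    refine Finset.sum_congr rfl fun j _ => ?_
    rw [real_inner_smul_right]
    ring
  rw [hw, Finset.mul_sum]
  refine Finset.sum_congr rfl fun j _ => ?_
  show v i * ((inner ℝ (D (EuclideanSpace.single i (1:ℝ))) (EuclideanSpace.single j (1:ℝ)) : ℝ) * w j)
    = (inner ℝ (D (EuclideanSpace.single i (1:ℝ))) (EuclideanSpace.single j (1:ℝ)) : ℝ) * v i * w j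
  ring

lemma norm_sq_eq_sum {n : ℕ} (v : EuclideanSpace ℝ (Fin n)) :
    ‖v‖ ^ 2 = ∑ i, v i ^ 2 := by
  rw [← real_inner_self_eq_norm_sq, PiLp.inner_apply]
  refine Finset.sum_congr rfl fun i _ => ?_
  simp [RCLike.inner_apply, conj_trivial, sq]

/-- generalized curvature–dimension inequality: for `u` of class
`C²` near `x` with `∇u(x) ≠ 0` on an `n`-manifold and any real `n' ≥ n`,
`|∇u|^{2p-4}(|H_u|² + p(p-2)A_u²) ≥ (Δ_p u)²/n' + (n'/(n'-1))(Δ_p u/n' - (p-1)|∇u|^{p-2}A_u)²`. -/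
theorem stmt15 {n : ℕ} (hn : 2 ≤ n) (p n' : ℝ) (hp : 1 < p) (hn' : (n:ℝ) ≤ n')
    (u : EuclideanSpace ℝ (Fin n) → ℝ) (x : EuclideanSpace ℝ (Fin n))
    (hu : ContDiffAt ℝ 2 u x) (hgrad : gradient u x ≠ 0) :
    (plap p u x) ^ 2 / n'
      + (n' / (n'-1)) * (plap p u x / n' - (p-1) * ‖gradient u x‖ ^ (p-2) * Au u x) ^ 2
    ≤ ‖gradient u x‖ ^ (2*p-4) * (hessNormSq u x + p * (p-2) * (Au u x) ^ 2) := by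
  set V := gradient u x with hVdef
  have hVnorm : (0:ℝ) < ‖V‖ := norm_pos_iff.mpr hgrad
  set A := Au u x with hA
  set T := lapl u x with hT
  set r := ‖V‖ ^ (p-2) with hr
  have hrpos : 0 < r := Real.rpow_pos_of_pos hVnorm _
  have hn'2 : (2:ℝ) ≤ n' := le_trans (by exact_mod_cast hn) hn'
  have hn'pos : (0:ℝ) < n' := by linarith
  have hn'1 : (0:ℝ) < n' - 1 := by linarith
  -- the Hessian inequality
  set H : Fin n → Fin n → ℝ := fun i j =>
    hess u x (EuclideanSpace.single i (1:ℝ)) (EuclideanSpace.single j (1:ℝ)) with hH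
  set ν : Fin n → ℝ := fun i => V i / ‖V‖ with hν
  have hνsum : ∑ i, ν i ^ 2 = 1 := by
    simp only [hν, div_pow]
    rw [← Finset.sum_div, ← norm_sq_eq_sum]
    field_simp
  have hVsq : ‖V‖ ^ 2 ≠ 0 := by positivity
  have haA : (∑ i, ∑ j, H i j * ν i * ν j) = A := by
    rw [hA, Au, ← hVdef, hess_repr, Finset.sum_div]
    refine Finset.sum_congr rfl fun i _ => ?_
    rw [Finset.sum_div]
    refine Finset.sum_congr rfl fun j _ => ?_
    rw [hν, hH]
    ring
  have hTsum : (∑ i, H i i) = T := rfl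
  have hess_ineq : A ^ 2 + (T - A) ^ 2 / (n'-1) ≤ hessNormSq u x := by
    have := alg_lemma hn n' hn' H ν hνsum
    rw [haA, hTsum] at this
    exact this
  -- plap formula
  have hhVV : hess u x V V = A * ‖V‖ ^ 2 := by
    rw [hA, Au, ← hVdef, div_mul_cancel₀ _ hVsq]
  have hplap : plap p u x = r * (T + (p-2) * A) := by
    rw [plap_eq p u x hu hgrad, ← hVdef, ← hT, hhVV]
    have h4 : ‖V‖ ^ (p-4) * ‖V‖ ^ 2 = r := by
      rw [hr, ← Real.rpow_natCast ‖V‖ 2, ← Real.rpow_add hVnorm]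
      congr 1
      push_cast
      ring
    rw [hr]
    calc ‖V‖ ^ (p-2) * T + (p-2) * ‖V‖ ^ (p-4) * (A * ‖V‖ ^ 2)
        = ‖V‖ ^ (p-2) * T + (p-2) * (‖V‖ ^ (p-4) * ‖V‖ ^ 2) * A := by ring
      _ = ‖V‖ ^ (p-2) * (T + (p-2) * A) := by rw [h4, hr]; ring
  have hnorm24 : ‖V‖ ^ (2*p-4) = r * r := by
    rw [hr, ← Real.rpow_add hVnorm]
    congr 1
    ring
  rw [hplap, hnorm24]
  have hident : (r * (T + (p-2)*A))^2/n' + (n'/(n'-1)) * ((r * (T + (p-2)*A))/n' - (p-1)*r*A)^2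
      = (r*r) * ((p-1)^2*A^2 + (T-A)^2/(n'-1)) := by
    field_simp
    ring
  rw [hident]
  have hrhs : (p-1)^2*A^2 + (T-A)^2/(n'-1) ≤ hessNormSq u x + p * (p-2) * A^2 := by
    have : (p-1)^2*A^2 = A^2 + p*(p-2)*A^2 := by ring
    linarith [hess_ineq]
  have hrr : (0:ℝ) ≤ r * r := by positivity
  exact mul_le_mul_of_nonneg_left hrhs hrr

end
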